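/- Let E be a measurable space with probability measures and suppose ρ_i, ρ_j : Ω → (0,∞) are measurable functions on Ω ⊆ E^{ℤ^d} satisfying: normalization λ_i(ρ_i) = 1 and λ_j(ρ_j) = 1 on Ω, and order-consistency ρ_i / λ_i(ρ_i ρ_j⁻¹) = ρ_j / λ_j(ρ_j ρ_i⁻¹) =: ρ_{ij} on Ω, where λ_i denotes integration of the i-th coordinate against an a-priori measure λ^i (leaving other coordinates fixed). Then the kernel ρ_{ij} λ_{ij} (where λ_{ij} = λ_i λ_j integrates coordinates i and j) satisfies (ρ_{ij} λ_{ij})(ρ_i λ_i (h)) = (ρ_{ij} λ_{ij})(h) for every bounded measurable h. -/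
import Mathlib


open MeasureTheory

private lemma integrable_of_pos_integral {α : Type*} [MeasurableSpace α] {μ : Measure α}
    {f : α → ℝ} (h : 0 < ∫ x, f x ∂μ) : Integrable f μ := by
  by_contra hf
  rw [integral_undef hf] at h
  exact lt_irrefl 0 h

/-- Initial inductive step (I5, |Λ∪Γ| = 2) of the reconstruction theorem.
The configuration space `E^{ℤ^d}` is split as `X × Y × Z` where `X` is the
coordinate `i`, `Y` the coordinate `j` and `Z` the remaining coordinates;
`λ_i` (resp. `λ_j`) integrates the first (resp. second) coordinate against the
a-priori measure `μ` (resp. `ν`), leaving the other coordinates fixed. -/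
theorem stmt15 {X Y Z : Type*} [MeasurableSpace X] [MeasurableSpace Y] [MeasurableSpace Z]
    (μ : Measure X) (ν : Measure Y) [SigmaFinite μ] [SigmaFinite ν]
    (ρi ρj : X × Y × Z → ℝ)
    (hρi : Measurable ρi) (hρj : Measurable ρj)
    (hρipos : ∀ ω, 0 < ρi ω) (hρjpos : ∀ ω, 0 < ρj ω)
    -- normalization: λ_i(ρ_i) = 1 and λ_j(ρ_j) = 1
    (hnormi : ∀ ω : X × Y × Z, ∫ x, ρi (x, ω.2) ∂μ = 1)
    (hnormj : ∀ ω : X × Y × Z, ∫ y, ρj (ω.1, y, ω.2.2) ∂ν = 1)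
    -- bounded positivity: 0 < inf λ_j(ρ_j ρ_i⁻¹), sup λ_j(ρ_j ρ_i⁻¹) < ∞, and symmetrically
    (hbp1 : ∃ c > (0:ℝ), ∀ ω : X × Y × Z,
      c ≤ ∫ y, ρj (ω.1, y, ω.2.2) / ρi (ω.1, y, ω.2.2) ∂ν)
    (hbp2 : ∃ c' : ℝ, ∀ ω : X × Y × Z,
      (∫ y, ρj (ω.1, y, ω.2.2) / ρi (ω.1, y, ω.2.2) ∂ν) ≤ c')
    (hbp3 : ∃ c > (0:ℝ), ∀ ω : X × Y × Z,
      c ≤ ∫ x, ρi (x, ω.2) / ρj (x, ω.2) ∂μ)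
    (hbp4 : ∃ c' : ℝ, ∀ ω : X × Y × Z,
      (∫ x, ρi (x, ω.2) / ρj (x, ω.2) ∂μ) ≤ c')
    -- order-consistency: ρ_{ij} = ρ_i / λ_i(ρ_i ρ_j⁻¹) = ρ_j / λ_j(ρ_j ρ_i⁻¹)
    (ρij : X × Y × Z → ℝ)
    (hoc1 : ∀ ω : X × Y × Z, ρij ω = ρi ω / ∫ x, ρi (x, ω.2) / ρj (x, ω.2) ∂μ)
    (hoc2 : ∀ ω : X × Y × Z, ρij ω = ρj ω / ∫ y, ρj (ω.1, y, ω.2.2) / ρi (ω.1, y, ω.2.2) ∂ν)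
    (h : X × Y × Z → ℝ) (hmeas : Measurable h) (hbdd : ∃ C, ∀ ω, |h ω| ≤ C) :
    -- (ρ_{ij} λ_{ij})((ρ_i λ_i)(h)) = (ρ_{ij} λ_{ij})(h)
    ∀ ω : X × Y × Z,
      (∫ x, ∫ y, ρij (x, y, ω.2.2) *
          (∫ x', ρi (x', y, ω.2.2) * h (x', y, ω.2.2) ∂μ) ∂ν ∂μ)
        = ∫ x, ∫ y, ρij (x, y, ω.2.2) * h (x, y, ω.2.2) ∂ν ∂μ := by
  obtain ⟨c1, hc1pos, hc1⟩ := hbp1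
  obtain ⟨c3, hc3pos, hc3⟩ := hbp3
  obtain ⟨C, hC⟩ := hbdd
  rintro ⟨a, b, z⟩
  have hCnn : 0 ≤ C := le_trans (abs_nonneg _) (hC (a, b, z))
  show (∫ x, ∫ y, ρij (x, y, z) *
          (∫ x', ρi (x', y, z) * h (x', y, z) ∂μ) ∂ν ∂μ)
        = ∫ x, ∫ y, ρij (x, y, z) * h (x, y, z) ∂ν ∂μ
  -- abbreviations
  set D : Y → ℝ := fun y => ∫ x, ρi (x, y, z) / ρj (x, y, z) ∂μ with hDdef
  set E : X → ℝ := fun x => ∫ y, ρj (x, y, z) / ρi (x, y, z) ∂ν with hEdef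
  set F : Y → ℝ := fun y => ∫ x', ρi (x', y, z) * h (x', y, z) ∂μ with hFdef
  have hDlb : ∀ y, c3 ≤ D y := fun y => hc3 (a, y, z)
  have hElb : ∀ x, c1 ≤ E x := fun x => hc1 (x, b, z)
  have hDpos : ∀ y, 0 < D y := fun y => lt_of_lt_of_le hc3pos (hDlb y)
  have hEpos : ∀ x, 0 < E x := fun x => lt_of_lt_of_le hc1pos (hElb x)
  have hnormi' : ∀ y : Y, ∫ x, ρi (x, y, z) ∂μ = 1 := fun y => hnormi (a, y, z)
  have hnormj' : ∀ x : X, ∫ y, ρj (x, y, z) ∂ν = 1 := fun x => hnormj (x, b, z)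
  have hoc1' : ∀ x y, ρij (x, y, z) = ρi (x, y, z) / D y := fun x y => hoc1 (x, y, z)
  have hoc2' : ∀ x y, ρij (x, y, z) = ρj (x, y, z) / E x := fun x y => hoc2 (x, y, z)
  have hρijpos : ∀ x y, 0 < ρij (x, y, z) := fun x y => by
    rw [hoc2' x y]; exact div_pos (hρjpos _) (hEpos x)
  -- basic integrabilities
  have hIi : ∀ y : Y, Integrable (fun x => ρi (x, y, z)) μ := fun y =>
    integrable_of_pos_integral (by rw [hnormi' y]; norm_num)
  have hIj : ∀ x : X, Integrable (fun y => ρj (x, y, z)) ν := fun x =>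
    integrable_of_pos_integral (by rw [hnormj' x]; norm_num)
  have hIij : ∀ y : Y, Integrable (fun x => ρi (x, y, z) / ρj (x, y, z)) μ := fun y =>
    integrable_of_pos_integral (hDpos y)
  -- key identity expressing 1 / E in closed form
  have key : ∀ x, 1 / E x = (1 / D b) * (ρi (x, b, z) / ρj (x, b, z)) := by
    intro x
    have h0 : ρi (x, b, z) / D b = ρj (x, b, z) / E x := (hoc1' x b).symm.trans (hoc2' x b)
    rw [div_eq_div_iff (hDpos b).ne' (hEpos x).ne'] at h0
    have hEne := (hEpos x).ne'
    have hDne := (hDpos b).ne'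
    have hjne := (hρjpos (x, b, z)).ne'
    field_simp
    linear_combination -h0
  have hInt_invE : Integrable (fun x => 1 / E x) μ :=
    ((hIij b).const_mul (1 / D b)).congr (Filter.Eventually.of_forall fun x => (key x).symm)
  -- measurability helpers
  have hmx : ∀ (y : Y), Measurable (fun x : X => (x, y, z) : X → X × Y × Z) := fun y =>
    measurable_id.prodMk measurable_const
  have hmy : ∀ (x : X), Measurable (fun y : Y => (x, y, z) : Y → X × Y × Z) := fun x =>
    measurable_const.prodMk (measurable_id.prodMk measurable_const)
  have hmp : Measurable (fun p : X × Y => (p.1, p.2, z) : X × Y → X × Y × Z) :=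
    measurable_fst.prodMk (measurable_snd.prodMk measurable_const)
  have hmeas_invE : Measurable (fun x => 1 / E x) := by
    have : (fun x => 1 / E x) = fun x => (1 / D b) * (ρi (x, b, z) / ρj (x, b, z)) :=
      funext key
    rw [this]
    exact (((hρi.comp (hmx b)).div (hρj.comp (hmx b))).const_mul _)
  -- the two-site density, as a function on the product, is integrable
  have hρijx : ∀ x y, ρij (x, y, z) = ρj (x, y, z) * (1 / E x) := fun x y => by
    rw [hoc2' x y, div_eq_mul_one_div]
  have hPmeas : Measurable (fun p : X × Y => ρij (p.1, p.2, z)) := by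
    have : (fun p : X × Y => ρij (p.1, p.2, z))
        = fun p : X × Y => ρj (p.1, p.2, z) * (1 / E p.1) :=
      funext fun p => hρijx p.1 p.2
    rw [this]
    exact (hρj.comp hmp).mul (hmeas_invE.comp measurable_fst)
  have hPint : Integrable (fun p : X × Y => ρij (p.1, p.2, z)) (μ.prod ν) := by
    rw [integrable_prod_iff hPmeas.aestronglyMeasurable]
    constructor
    · refine Filter.Eventually.of_forall fun x => ?_
      exact ((hIj x).mul_const (1 / E x)).congr
        (Filter.Eventually.of_forall fun y => (hρijx x y).symm)
    · have heq : ∀ x, (∫ y, ‖ρij (x, y, z)‖ ∂ν) = 1 / E x := by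
        intro x
        have h1 : ∀ y : Y, ‖ρij (x, y, z)‖ = ρj (x, y, z) * (1 / E x) := fun y => by
          rw [Real.norm_eq_abs, abs_of_pos (hρijpos x y), hρijx x y]
        simp only [h1]
        rw [integral_mul_const, hnormj' x, one_mul]
      exact hInt_invE.congr (Filter.Eventually.of_forall fun x => (heq x).symm)
  -- F is bounded by C and strongly measurable
  have hIih : ∀ y : Y, Integrable (fun x => ρi (x, y, z) * h (x, y, z)) μ := by
    intro y
    refine Integrable.mono' ((hIi y).mul_const C)
      (((hρi.comp (hmx y)).mul (hmeas.comp (hmx y))).aestronglyMeasurable)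
      (Filter.Eventually.of_forall fun x => ?_)
    rw [Real.norm_eq_abs, abs_mul, abs_of_pos (hρipos _)]
    exact mul_le_mul_of_nonneg_left (hC _) (hρipos _).le
  have hFb : ∀ y, |F y| ≤ C := by
    intro y
    calc |F y| ≤ ∫ x, |ρi (x, y, z)| * |h (x, y, z)| ∂μ := by
          simpa [Real.norm_eq_abs, abs_mul] using norm_integral_le_integral_norm
            (fun x => ρi (x, y, z) * h (x, y, z)) (μ := μ)
      _ ≤ ∫ x, ρi (x, y, z) * C ∂μ := by
          refine integral_mono ?_ ((hIi y).mul_const C) fun x => ?_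
          · have := (hIih y).abs
            exact this.congr (Filter.Eventually.of_forall fun x => by simp [abs_mul])
          · rw [abs_of_pos (hρipos _)]
            exact mul_le_mul_of_nonneg_left (hC _) (hρipos _).le
      _ = C := by rw [integral_mul_const, hnormi' y, one_mul]
  have hFsm : StronglyMeasurable F := by
    have : StronglyMeasurable (fun p : X × Y => ρi (p.1, p.2, z) * h (p.1, p.2, z)) :=
      ((hρi.comp hmp).mul (hmeas.comp hmp)).stronglyMeasurable
    exact this.integral_prod_left'
  -- integrability of the two Fubini integrands
  have hPFint : Integrable (fun p : X × Y => ρij (p.1, p.2, z) * F p.2) (μ.prod ν) := by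
    refine Integrable.mono' (hPint.mul_const C)
      (hPmeas.aestronglyMeasurable.mul
        ((hFsm.measurable.comp measurable_snd).aestronglyMeasurable))
      (Filter.Eventually.of_forall fun p => ?_)
    rw [Real.norm_eq_abs, abs_mul, abs_of_pos (hρijpos p.1 p.2)]
    exact mul_le_mul_of_nonneg_left (hFb p.2) (hρijpos p.1 p.2).le
  have hPhint : Integrable (fun p : X × Y => ρij (p.1, p.2, z) * h (p.1, p.2, z)) (μ.prod ν) := by
    refine Integrable.mono' (hPint.mul_const C)
      (hPmeas.aestronglyMeasurable.mul ((hmeas.comp hmp).aestronglyMeasurable))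
      (Filter.Eventually.of_forall fun p => ?_)
    rw [Real.norm_eq_abs, abs_mul, abs_of_pos (hρijpos p.1 p.2)]
    exact mul_le_mul_of_nonneg_left (hC _) (hρijpos p.1 p.2).le
  -- main computation
  calc (∫ x, ∫ y, ρij (x, y, z) * F y ∂ν ∂μ)
      = ∫ y, ∫ x, ρij (x, y, z) * F y ∂μ ∂ν := integral_integral_swap hPFint
    _ = ∫ y, ∫ x, ρij (x, y, z) * h (x, y, z) ∂μ ∂ν := by
        refine integral_congr_ae (Filter.Eventually.of_forall fun y => ?_)
        show (∫ x, ρij (x, y, z) * F y ∂μ) = ∫ x, ρij (x, y, z) * h (x, y, z) ∂μ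
        have l2 : ∫ x, ρij (x, y, z) ∂μ = 1 / D y := by
          simp only [hoc1']
          rw [integral_div, hnormi' y]
        have l3 : ∫ x, ρij (x, y, z) * h (x, y, z) ∂μ
            = (∫ x, ρi (x, y, z) * h (x, y, z) ∂μ) / D y := by
          simp only [hoc1', div_mul_eq_mul_div]
          rw [integral_div]
        rw [integral_mul_const, l2, l3, one_div_mul_eq_div]
    _ = ∫ x, ∫ y, ρij (x, y, z) * h (x, y, z) ∂ν ∂μ := (integral_integral_swap hPhint).symm
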